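/- Let V₁ : ℝⁿ → ℝ be continuous, proper (sublevel sets compact), and nonnegative, and let ψ₁ : ℝⁿ → ℝ be continuous. Fix M > 0 and a > 0, and define A = {(x₁,x₂) ∈ ℝⁿ × ℝ : V₁(x₁) ≤ M, x₂ = ψ₁(x₁)}. For k ∈ ℕ, k ≥ 1, define V_k(x₁,x₂) = V₁(x₁) + k·(x₂ − ψ₁(x₁))². Then there exists k ≥ 1 such that the sublevel set {(x₁,x₂) : V_k(x₁,x₂) ≤ 1/k} is contained in the open a-neighborhood A + a·B₁ of A. -/
import Mathlib


/-- there exists `k ≥ 1` such that the sublevel set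
`{V_k ≤ 1/k}` of `V_k(x₁,x₂) = V₁(x₁) + k (x₂ - ψ₁ x₁)²` is contained in the
open `a`-neighborhood of `A = {(x₁,x₂) : V₁ x₁ ≤ M, x₂ = ψ₁ x₁}`. -/
theorem stmt_0 (n : ℕ) (V₁ : (Fin n → ℝ) → ℝ) (ψ₁ : (Fin n → ℝ) → ℝ)
    (hV₁c : Continuous V₁) (hV₁proper : ∀ c : ℝ, IsCompact {x | V₁ x ≤ c})
    (hV₁nonneg : ∀ x, 0 ≤ V₁ x) (hψ₁ : Continuous ψ₁)
    (M a : ℝ) (hM : 0 < M) (ha : 0 < a)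
    (A : Set ((Fin n → ℝ) × ℝ))
    (hA : A = {p | V₁ p.1 ≤ M ∧ p.2 = ψ₁ p.1}) :
    ∃ k : ℕ, 1 ≤ k ∧
      {p : (Fin n → ℝ) × ℝ | V₁ p.1 + (k : ℝ) * (p.2 - ψ₁ p.1) ^ 2 ≤ 1 / (k : ℝ)} ⊆
        {y | ∃ x ∈ A, dist y x < a} := by
  obtain ⟨k, hk⟩ := exists_nat_gt (max (1 / M) (1 / a))
  have hmaxpos : 0 < max (1 / M) (1 / a) :=
    lt_max_of_lt_left (one_div_pos.mpr hM)
  have hkpos : (0 : ℝ) < k := hmaxpos.trans hk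
  refine ⟨k, by exact_mod_cast hkpos, ?_⟩
  intro p hp
  simp only [Set.mem_setOf_eq] at hp
  have hsq : 0 ≤ (k : ℝ) * (p.2 - ψ₁ p.1) ^ 2 := by positivity
  have hV : V₁ p.1 ≤ 1 / k := by linarith
  have hVM : V₁ p.1 ≤ M := by
    refine hV.trans ?_
    rw [div_le_iff₀ hkpos]
    have h1M : 1 / M < k := (le_max_left _ _).trans_lt hk
    rw [div_lt_iff₀ hM] at h1M
    linarith
  have hks : (k : ℝ) * (p.2 - ψ₁ p.1) ^ 2 ≤ 1 / k := by
    have := hV₁nonneg p.1; linarith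
  have hsq2 : (p.2 - ψ₁ p.1) ^ 2 ≤ (1 / k) ^ 2 := by
    have h : (p.2 - ψ₁ p.1) ^ 2 ≤ 1 / k / k := by
      rw [le_div_iff₀ hkpos]; linarith
    calc (p.2 - ψ₁ p.1) ^ 2 ≤ 1 / k / k := h
      _ = (1 / k) ^ 2 := by ring
  have habs : |p.2 - ψ₁ p.1| ≤ 1 / k :=
    abs_le.mpr (abs_le_of_sq_le_sq' hsq2 (by positivity))
  have hlt : |p.2 - ψ₁ p.1| < a := by
    have h1a : 1 / a < k := (le_max_right _ _).trans_lt hk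
    rw [div_lt_iff₀ ha] at h1a
    have : 1 / (k : ℝ) < a := by rw [div_lt_iff₀ hkpos]; linarith
    linarith
  refine ⟨(p.1, ψ₁ p.1), by rw [hA]; exact ⟨hVM, rfl⟩, ?_⟩
  have : dist p (p.1, ψ₁ p.1) = max (dist p.1 p.1) (dist p.2 (ψ₁ p.1)) := rfl
  rw [this, dist_self]
  simp only [Real.dist_eq]
  exact max_lt ha hlt
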